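/- Let a > 0, λ ≥ 0, and let f : [0,∞) → ℝ be defined by f(r) = (1/2)·∫₀^r exp((a s⁴ − 2λ s²)/8)·(∫_s^∞ exp(−(a σ⁴ − 2λ σ²)/8) dσ) ds. Then f'(r) > 0 for every r ≥ 0 and f''(r) < 0 for every r ≥ 0; in particular f' is a strictly decreasing positive function on [0,∞). -/

import Mathlib

open MeasureTheory Filter Set Real Topology

section Stmt3Aux

variable {a lam : ℝ}

private lemma stmt3_contE : Continuous (fun σ : ℝ => Real.exp (-((a * σ ^ 4 - 2 * lam * σ ^ 2) / 8))) := by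
  continuity

private lemma stmt3_intE (ha : 0 < a) :
    Integrable (fun σ : ℝ => Real.exp (-((a * σ ^ 4 - 2 * lam * σ ^ 2) / 8))) := by
  have hgi : Integrable (fun σ : ℝ =>
      Real.exp (2 * (lam / 4 + 1) ^ 2 / a) * Real.exp (-(1 : ℝ) * σ ^ 2)) :=
    (integrable_exp_neg_mul_sq (by norm_num : (0:ℝ) < 1)).const_mul _
  refine hgi.mono' stmt3_contE.aestronglyMeasurable (Filter.Eventually.of_forall fun σ => ?_)
  rw [Real.norm_eq_abs, abs_of_pos (Real.exp_pos _), ← Real.exp_add]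
  apply Real.exp_le_exp.mpr
  have h1 : (lam / 4 + 1) * σ ^ 2 - a * σ ^ 4 / 8 ≤ 2 * (lam / 4 + 1) ^ 2 / a := by
    rw [le_div_iff₀ ha]
    nlinarith [sq_nonneg (a * σ ^ 2 - 4 * (lam / 4 + 1))]
  linarith [h1]

private lemma stmt3_hasDerivI (ha : 0 < a) (s : ℝ) :
    HasDerivAt (fun s : ℝ => ∫ σ in Set.Ioi s, Real.exp (-((a * σ ^ 4 - 2 * lam * σ ^ 2) / 8)))
      (-(Real.exp (-((a * s ^ 4 - 2 * lam * s ^ 2) / 8)))) s := by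
  set E : ℝ → ℝ := fun σ => Real.exp (-((a * σ ^ 4 - 2 * lam * σ ^ 2) / 8)) with hE
  have hint : Integrable E := stmt3_intE ha
  have hcont : Continuous E := stmt3_contE
  have key : ∀ t : ℝ, (∫ σ in Set.Ioi t, E σ)
      = ((∫ σ, E σ) - ∫ σ in Set.Iic (0:ℝ), E σ) - ∫ x in (0:ℝ)..t, E x := by
    intro t
    have h1 : (∫ x in Set.Iic t, E x) + (∫ x in Set.Ioi t, E x) = ∫ x, E x :=
      intervalIntegral.integral_Iic_add_Ioi hint.integrableOn hint.integrableOn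
    have h2 : (∫ x in Set.Iic t, E x) - ∫ x in Set.Iic (0:ℝ), E x = ∫ x in (0:ℝ)..t, E x :=
      intervalIntegral.integral_Iic_sub_Iic hint.integrableOn hint.integrableOn
    linarith
  have hd : HasDerivAt (fun u : ℝ => ∫ x in (0:ℝ)..u, E x) (E s) s :=
    intervalIntegral.integral_hasDerivAt_right (hcont.intervalIntegrable _ _)
      hcont.stronglyMeasurable.stronglyMeasurableAtFilter hcont.continuousAt
  have := ((hasDerivAt_const s ((∫ σ, E σ) - ∫ σ in Set.Iic (0:ℝ), E σ)).sub hd)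
  rw [zero_sub] at this
  exact this.congr_of_eventuallyEq (Filter.Eventually.of_forall fun t => key t)

private lemma stmt3_Ipos (ha : 0 < a) (s : ℝ) :
    0 < ∫ σ in Set.Ioi s, Real.exp (-((a * σ ^ 4 - 2 * lam * σ ^ 2) / 8)) := by
  rw [setIntegral_pos_iff_support_of_nonneg_ae
    (Filter.Eventually.of_forall fun σ => (Real.exp_pos _).le) (stmt3_intE ha).integrableOn]
  have hsupp : Function.support (fun σ : ℝ => Real.exp (-((a * σ ^ 4 - 2 * lam * σ ^ 2) / 8)))
      = Set.univ := by
    ext σ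
    simp [Function.mem_support, Real.exp_ne_zero]
  rw [hsupp, Set.univ_inter, Real.volume_Ioi]
  exact ENNReal.zero_lt_top

private lemma stmt3_tendsto (ha : 0 < a) :
    Tendsto (fun σ : ℝ => -(Real.exp (-((a * σ ^ 4 - 2 * lam * σ ^ 2) / 8)))) atTop (𝓝 0) := by
  have hP : Tendsto (fun σ : ℝ => (a * σ ^ 4 - 2 * lam * σ ^ 2) / 8) atTop atTop := by
    apply Tendsto.atTop_div_const (by norm_num : (0:ℝ) < 8)
    have h1 : Tendsto (fun σ : ℝ => σ ^ 2) atTop atTop :=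
      tendsto_pow_atTop (by norm_num)
    have h2 : Tendsto (fun σ : ℝ => a * σ ^ 2 - 2 * lam) atTop atTop :=
      tendsto_atTop_add_const_right _ _ (h1.const_mul_atTop ha)
    have h3 := h1.atTop_mul_atTop₀ h2
    refine h3.congr fun σ => by ring
  have h4 : Tendsto (fun σ : ℝ => Real.exp (-((a * σ ^ 4 - 2 * lam * σ ^ 2) / 8))) atTop (𝓝 0) :=
    Real.tendsto_exp_neg_atTop_nhds_zero.comp hP
  simpa using h4.neg

private lemma stmt3_hasDerivP (s : ℝ) :
    HasDerivAt (fun s : ℝ => (a * s ^ 4 - 2 * lam * s ^ 2) / 8) ((a * s ^ 3 - lam * s) / 2) s := by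
  have h := (((hasDerivAt_pow 4 s).const_mul a).sub ((hasDerivAt_pow 2 s).const_mul (2 * lam))).div_const 8
  simp only [Pi.sub_apply] at h
  refine h.congr_deriv ?_
  push_cast
  ring

end Stmt3Aux

set_option maxHeartbeats 1000000

/-- For `a > 0`, `λ ≥ 0`, and
`f r = (1/2) ∫₀^r exp((a s⁴ − 2λ s²)/8) (∫_s^∞ exp(−(a σ⁴ − 2λ σ²)/8) dσ) ds`,
one has `f'(r) > 0` and `f''(r) < 0` for every `r ≥ 0`; in particular `f'` is a strictly
decreasing positive function on `[0,∞)`. -/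
theorem stmt3 (a lam : ℝ) (ha : 0 < a) (hlam : 0 ≤ lam) (f : ℝ → ℝ)
    (hf : ∀ r : ℝ, f r = (1 / 2) * ∫ s in (0:ℝ)..r,
      Real.exp ((a * s ^ 4 - 2 * lam * s ^ 2) / 8) *
        ∫ σ in Set.Ioi s, Real.exp (-((a * σ ^ 4 - 2 * lam * σ ^ 2) / 8))) :
    (∀ r : ℝ, 0 ≤ r → 0 < deriv f r) ∧
    (∀ r : ℝ, 0 ≤ r → deriv (deriv f) r < 0) ∧
    StrictAntiOn (deriv f) (Set.Ici 0) := by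
  set E : ℝ → ℝ := fun σ => Real.exp (-((a * σ ^ 4 - 2 * lam * σ ^ 2) / 8)) with hE
  set I : ℝ → ℝ := fun s => ∫ σ in Set.Ioi s, E σ with hI
  set g : ℝ → ℝ := fun s => Real.exp ((a * s ^ 4 - 2 * lam * s ^ 2) / 8) * I s with hg
  have hIpos : ∀ s : ℝ, 0 < I s := fun s => stmt3_Ipos ha s
  have hId : ∀ s : ℝ, HasDerivAt I (-(E s)) s := fun s => stmt3_hasDerivI ha s
  have hIcont : Continuous I := by
    have : Differentiable ℝ I := fun s => (hId s).differentiableAt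
    exact this.continuous
  have hgcont : Continuous g := by
    apply Continuous.mul _ hIcont
    continuity
  -- derivative of g
  have hgd : ∀ s : ℝ, HasDerivAt g ((a * s ^ 3 - lam * s) / 2 * g s - 1) s := by
    intro s
    have hexp : HasDerivAt (fun s : ℝ => Real.exp ((a * s ^ 4 - 2 * lam * s ^ 2) / 8))
        (Real.exp ((a * s ^ 4 - 2 * lam * s ^ 2) / 8) * ((a * s ^ 3 - lam * s) / 2)) s :=
      (stmt3_hasDerivP s).exp
    have h := hexp.mul (hId s)
    refine h.congr_deriv ?_
    have hmul : Real.exp ((a * s ^ 4 - 2 * lam * s ^ 2) / 8) * E s = 1 := by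
      rw [hE, ← Real.exp_add]
      simp
    simp only [hg, mul_neg]
    nlinarith [hmul]
  -- derivative of f
  have hfd : ∀ r : ℝ, HasDerivAt f ((1 / 2) * g r) r := by
    intro r
    have hd : HasDerivAt (fun u : ℝ => ∫ x in (0:ℝ)..u, g x) (g r) r :=
      intervalIntegral.integral_hasDerivAt_right (hgcont.intervalIntegrable _ _)
        hgcont.stronglyMeasurable.stronglyMeasurableAtFilter hgcont.continuousAt
    have := hd.const_mul (1 / 2 : ℝ)
    exact this.congr_of_eventuallyEq (Filter.Eventually.of_forall fun t => hf t)
  have hderivf : deriv f = fun r => (1 / 2) * g r := funext fun r => (hfd r).deriv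
  -- key inequality
  have key : ∀ r : ℝ, 0 ≤ r → (a * r ^ 3 - lam * r) / 2 * g r < 1 := by
    intro r hr
    rcases le_or_gt ((a * r ^ 3 - lam * r) / 2) 0 with hp | hp
    · have hgpos : 0 < g r := mul_pos (Real.exp_pos _) (hIpos r)
      nlinarith
    · -- positive case: r > 0 and a r^2 > lam
      have hr0 : 0 < r := by
        rcases eq_or_lt_of_le hr with h | h
        · exfalso; rw [← h] at hp; norm_num at hp
        · exact h
      have hlr : lam < a * r ^ 2 := by nlinarith
      set p : ℝ := (a * r ^ 3 - lam * r) / 2 with hpdef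
      -- derivative of σ ↦ -E σ is P'(σ) E σ
      have hEd : ∀ σ : ℝ, HasDerivAt (fun σ => -(E σ)) ((a * σ ^ 3 - lam * σ) / 2 * E σ) σ := by
        intro σ
        have h := ((stmt3_hasDerivP (a := a) (lam := lam) σ).neg.exp).neg
        simp only [Pi.neg_apply] at h
        refine h.congr_deriv ?_
        ring
      have hnonneg : ∀ σ ∈ Set.Ioi r, 0 ≤ (a * σ ^ 3 - lam * σ) / 2 * E σ := by
        intro σ hσ
        have hσr : r < σ := hσ
        have hσ0 : 0 < σ := hr0.trans hσr
        have hr2 : r ^ 2 ≤ σ ^ 2 := by nlinarith [mul_nonneg (sub_nonneg.mpr hσr.le) (by linarith : (0:ℝ) ≤ σ + r)]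
        have hsq : a * r ^ 2 ≤ a * σ ^ 2 := mul_le_mul_of_nonneg_left hr2 ha.le
        have : 0 ≤ (a * σ ^ 3 - lam * σ) / 2 := by nlinarith [mul_pos hσ0 hσ0]
        exact mul_nonneg this (Real.exp_pos _).le
      have heq : (∫ σ in Set.Ioi r, (a * σ ^ 3 - lam * σ) / 2 * E σ) = 0 - (-(E r)) :=
        integral_Ioi_of_hasDerivAt_of_nonneg' (fun σ _ => hEd σ) hnonneg (stmt3_tendsto ha)
      have hint : IntegrableOn (fun σ => (a * σ ^ 3 - lam * σ) / 2 * E σ) (Set.Ioi r) :=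
        integrableOn_Ioi_deriv_of_nonneg' (fun σ _ => hEd σ) hnonneg (stmt3_tendsto ha)
      have hintp : IntegrableOn (fun σ => p * E σ) (Set.Ioi r) :=
        ((stmt3_intE ha).integrableOn).const_mul p
      -- strict inequality between integrals
      have hintd : IntegrableOn (fun σ => (a * σ ^ 3 - lam * σ) / 2 * E σ - p * E σ)
          (Set.Ioi r) := hint.sub hintp
      have hdiffpos : 0 < ∫ σ in Set.Ioi r, ((a * σ ^ 3 - lam * σ) / 2 * E σ - p * E σ) := by
        rw [setIntegral_pos_iff_support_of_nonneg_ae _ hintd]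
        · have hsub : Set.Ioi r ⊆ Function.support
              (fun σ => (a * σ ^ 3 - lam * σ) / 2 * E σ - p * E σ) := by
            intro σ hσ
            have hσr : r < σ := hσ
            have h1 : p < (a * σ ^ 3 - lam * σ) / 2 := by
              have h2 : 0 < a * (σ ^ 2 + σ * r + r ^ 2) - lam := by
                nlinarith [mul_nonneg (sub_nonneg.mpr hσr.le) (by linarith : (0:ℝ) ≤ σ + r),
                  mul_nonneg (sub_nonneg.mpr hσr.le) hr0.le,
                  mul_le_mul_of_nonneg_left (mul_nonneg (sub_nonneg.mpr hσr.le) (by linarith : (0:ℝ) ≤ σ + r)) ha.le,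
                  mul_le_mul_of_nonneg_left (mul_nonneg (sub_nonneg.mpr hσr.le) hr0.le) ha.le]
              rw [hpdef]
              have : a * σ ^ 3 - lam * σ - (a * r ^ 3 - lam * r)
                  = (σ - r) * (a * (σ ^ 2 + σ * r + r ^ 2) - lam) := by ring
              nlinarith [mul_pos (sub_pos.mpr hσr) h2]
            have h3 : 0 < ((a * σ ^ 3 - lam * σ) / 2 - p) * E σ :=
              mul_pos (by linarith) (Real.exp_pos _)
            simp only [Function.mem_support]
            intro hzero
            nlinarith [h3]
          have : volume (Function.support
              (fun σ => (a * σ ^ 3 - lam * σ) / 2 * E σ - p * E σ) ∩ Set.Ioi r)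
              = volume (Set.Ioi r) := by
            congr 1
            exact Set.inter_eq_right.mpr hsub
          rw [this, Real.volume_Ioi]
          exact ENNReal.zero_lt_top
        · apply ae_restrict_of_forall_mem measurableSet_Ioi
          intro σ hσ
          have hσr : r < σ := hσ
          have h1 : p ≤ (a * σ ^ 3 - lam * σ) / 2 := by
            have h2 : 0 ≤ a * (σ ^ 2 + σ * r + r ^ 2) - lam := by
              nlinarith [mul_nonneg (sub_nonneg.mpr hσr.le) (by linarith : (0:ℝ) ≤ σ + r),
                mul_nonneg (sub_nonneg.mpr hσr.le) hr0.le,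
                mul_le_mul_of_nonneg_left (mul_nonneg (sub_nonneg.mpr hσr.le) (by linarith : (0:ℝ) ≤ σ + r)) ha.le,
                mul_le_mul_of_nonneg_left (mul_nonneg (sub_nonneg.mpr hσr.le) hr0.le) ha.le]
            have hid : a * σ ^ 3 - lam * σ - (a * r ^ 3 - lam * r)
                = (σ - r) * (a * (σ ^ 2 + σ * r + r ^ 2) - lam) := by ring
            rw [hpdef]
            nlinarith [mul_nonneg (sub_nonneg.mpr hσr.le) h2]
          have := mul_nonneg (sub_nonneg.mpr h1) (Real.exp_pos (-((a * σ ^ 4 - 2 * lam * σ ^ 2) / 8))).le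
          simp only [Pi.zero_apply]
          nlinarith [this]
      have hsplit : (∫ σ in Set.Ioi r, ((a * σ ^ 3 - lam * σ) / 2 * E σ - p * E σ))
          = (∫ σ in Set.Ioi r, (a * σ ^ 3 - lam * σ) / 2 * E σ) - ∫ σ in Set.Ioi r, p * E σ :=
        integral_sub hint hintp
      have hconst : (∫ σ in Set.Ioi r, p * E σ) = p * I r := by
        rw [hI]
        exact integral_const_mul p E
      have hlt : p * I r < E r := by
        rw [← hconst]
        have := heq
        rw [zero_sub, neg_neg] at this
        linarith [hdiffpos, hsplit.symm ▸ hdiffpos]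
      -- conclude
      have hexpEr : Real.exp ((a * r ^ 4 - 2 * lam * r ^ 2) / 8) * E r = 1 := by
        rw [hE, ← Real.exp_add]; simp
      have hexppos : (0:ℝ) < Real.exp ((a * r ^ 4 - 2 * lam * r ^ 2) / 8) := Real.exp_pos _
      calc (a * r ^ 3 - lam * r) / 2 * g r
          = Real.exp ((a * r ^ 4 - 2 * lam * r ^ 2) / 8) * (p * I r) := by
            rw [hg, hpdef]; ring
        _ < Real.exp ((a * r ^ 4 - 2 * lam * r ^ 2) / 8) * E r :=
            (mul_lt_mul_iff_right₀ hexppos).mpr hlt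
        _ = 1 := hexpEr
  -- second derivative
  have hd2 : ∀ r : ℝ, deriv (deriv f) r = (1 / 2) * ((a * r ^ 3 - lam * r) / 2 * g r - 1) := by
    intro r
    rw [hderivf]
    exact ((hgd r).const_mul (1 / 2 : ℝ)).deriv
  refine ⟨?_, ?_, ?_⟩
  · intro r _
    rw [hderivf]
    exact mul_pos (by norm_num) (mul_pos (Real.exp_pos _) (hIpos r))
  · intro r hr
    rw [hd2 r]
    have hk := key r hr
    linarith
  · apply strictAntiOn_of_deriv_neg (convex_Ici 0)
    · rw [hderivf]
      exact (continuous_const.mul hgcont).continuousOn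
    · intro x hx
      rw [interior_Ici] at hx
      rw [hd2 x]
      have hk := key x (le_of_lt hx)
      linarith
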